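/- arXiv:math/0209383 — 3 statements merged into one kernel-verified Lean document; each statement's English description precedes it below -/
import Mathlib

section
/- Let θ : (0,∞) → ℂ be continuous. Assume (i) there is δ > 0 such that θ(t) = O(e^{−δt}) as t → ∞, and (ii) there are a strictly increasing sequence of real numbers α₀ < α₁ < α₂ < ⋯ with αₖ → +∞ and complex numbers c₀, c₁, c₂, … such that for every K ∈ ℕ one has θ(t) − ∑_{k<K} cₖ t^{αₖ} = O(t^{α_K}) as t → 0⁺ (an asymptotic expansion of θ at 0). Then the Mellin integral M(z) = ∫₀^∞ t^{z−1} θ(t) dt converges absolutely for Re(z) > −α₀ and there is a function F, holomorphic on ℂ \ {−αₖ : k ∈ ℕ}, which agrees with M on the half-plane Re(z) > −α₀ and which has at each point z = −αₖ at worst a simple pole with residue cₖ; that is, for every k the function z ↦ (z + αₖ) F(z) extends holomorphically across −αₖ with value cₖ there. -/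
open MeasureTheory Set Filter Asymptotics Complex Topology

/-- Mellin continuation of a function with exponential decay at infinity and an
asymptotic expansion at `0⁺`: the Mellin integral converges absolutely for
`Re z > -α 0` and extends to a function holomorphic away from the points `-αₖ`,
with at worst simple poles there of residue `cₖ`. -/
theorem stmt_0
    (θ : ℝ → ℂ) (hθcont : ContinuousOn θ (Set.Ioi 0))
    (δ : ℝ) (hδ : 0 < δ)
    (hdecay : Asymptotics.IsBigO Filter.atTop θ (fun t : ℝ => Real.exp (-δ * t)))
    (α : ℕ → ℝ) (hα : StrictMono α)
    (hαtop : Filter.Tendsto α Filter.atTop Filter.atTop)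
    (c : ℕ → ℂ)
    (hexp : ∀ K : ℕ,
      Asymptotics.IsBigO (nhdsWithin (0 : ℝ) (Set.Ioi 0))
        (fun t : ℝ => θ t - ∑ k ∈ Finset.range K, c k * ((t ^ α k : ℝ) : ℂ))
        (fun t : ℝ => t ^ α K)) :
    (∀ z : ℂ, -α 0 < z.re →
        MeasureTheory.IntegrableOn (fun t : ℝ => (t : ℂ) ^ (z - 1) * θ t) (Set.Ioi 0)) ∧
    ∃ F : ℂ → ℂ,
      DifferentiableOn ℂ F {z : ℂ | ∀ k : ℕ, z ≠ ((-α k : ℝ) : ℂ)} ∧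
      (∀ z : ℂ, -α 0 < z.re →
        F z = ∫ t in Set.Ioi (0 : ℝ), (t : ℂ) ^ (z - 1) * θ t) ∧
      (∀ k : ℕ, ∃ U ∈ nhds ((-α k : ℝ) : ℂ), ∃ G : ℂ → ℂ,
        DifferentiableOn ℂ G U ∧
        (∀ z ∈ U, z ≠ ((-α k : ℝ) : ℂ) → G z = (z + (α k : ℂ)) * F z) ∧
        G ((-α k : ℝ) : ℂ) = c k) := by
  classical
  have hz : ∀ z : ℂ, ∃ K, -α K < z.re := by
    intro z
    obtain ⟨K, hK⟩ := (hαtop.eventually_gt_atTop (-z.re)).exists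
    exact ⟨K, by linarith⟩
  set θt : ℝ → ℂ := (Set.Ioi (1 : ℝ)).indicator θ with hθt_def
  set g : ℕ → ℝ → ℂ :=
    fun K t => θ t - ∑ k ∈ Finset.range K, c k * ((t ^ α k : ℝ) : ℂ) with hg_def
  set h : ℕ → ℝ → ℂ := fun K => (Set.Ioc (0 : ℝ) 1).indicator (g K) with hh_def
  -- local integrability
  have hind : ∀ (f : ℝ → ℂ) (T : Set ℝ), MeasurableSet T → LocallyIntegrableOn f (Set.Ioi 0) →
      LocallyIntegrableOn (T.indicator f) (Set.Ioi 0) := by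
    intro f T hT hf
    rw [locallyIntegrableOn_iff isOpen_Ioi.isLocallyClosed] at hf ⊢
    exact fun k hk hk' => (hf k hk hk').indicator hT
  have hθloc : LocallyIntegrableOn θ (Set.Ioi 0) :=
    hθcont.locallyIntegrableOn measurableSet_Ioi
  have hgcont : ∀ K, ContinuousOn (g K) (Set.Ioi 0) := by
    intro K
    refine hθcont.sub (continuousOn_finset_sum _ fun k _ => ?_)
    exact continuousOn_const.mul
      (Complex.continuous_ofReal.comp_continuousOn
        (continuousOn_id.rpow_const fun t ht => Or.inl (ne_of_gt ht)))
  have hθtloc : LocallyIntegrableOn θt (Set.Ioi 0) := hind θ _ measurableSet_Ioi hθloc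
  have hhloc : ∀ K, LocallyIntegrableOn (h K) (Set.Ioi 0) := fun K =>
    hind (g K) _ measurableSet_Ioc ((hgcont K).locallyIntegrableOn measurableSet_Ioi)
  -- asymptotics
  have hθt_top : θt =O[atTop] fun t => Real.exp (-δ * t) := by
    refine hdecay.congr' ?_ EventuallyEq.rfl
    filter_upwards [eventually_gt_atTop (1 : ℝ)] with t ht
    exact (Set.indicator_of_mem (Set.mem_Ioi.mpr ht) θ).symm
  have hθt_bot : ∀ b : ℝ, θt =O[𝓝[>] (0 : ℝ)] (· ^ (-b)) := by
    intro b
    have h0 : θt =ᶠ[𝓝[>] (0 : ℝ)] (fun _ => (0 : ℂ)) := by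
      filter_upwards [Ioo_mem_nhdsGT_of_mem (Set.left_mem_Ico.mpr one_pos)]
        with t ht
      exact Set.indicator_of_notMem
        (by simp only [Set.mem_Ioi, not_lt]; exact (Set.mem_Ioo.mp ht).2.le) θ
    exact (isBigO_zero _ _).congr' h0.symm EventuallyEq.rfl
  have hh_top : ∀ K, h K =O[atTop] fun t => Real.exp (-δ * t) := by
    intro K
    have h0 : h K =ᶠ[atTop] (fun _ => (0 : ℂ)) := by
      filter_upwards [eventually_gt_atTop (1 : ℝ)] with t ht
      exact Set.indicator_of_notMem (by simp [Set.mem_Ioc]; intro _; linarith) (g K)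
    exact (isBigO_zero _ _).congr' h0.symm EventuallyEq.rfl
  have hh_bot : ∀ K, h K =O[𝓝[>] (0 : ℝ)] (· ^ (-(-α K))) := by
    intro K
    have h0 : h K =ᶠ[𝓝[>] (0 : ℝ)] g K := by
      filter_upwards [Ioo_mem_nhdsGT_of_mem (Set.left_mem_Ico.mpr one_pos)]
        with t ht
      exact Set.indicator_of_mem
        (Set.mem_Ioc.mpr ⟨(Set.mem_Ioo.mp ht).1, (Set.mem_Ioo.mp ht).2.le⟩) (g K)
    simpa only [neg_neg] using (hexp K).congr' h0.symm EventuallyEq.rfl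
  -- convergence
  have hMθt : ∀ z : ℂ, MellinConvergent θt z := fun z =>
    mellinConvergent_of_isBigO_rpow_exp hδ hθtloc hθt_top (hθt_bot (z.re - 1))
      (sub_one_lt _)
  have hMh : ∀ K (z : ℂ), -α K < z.re → MellinConvergent (h K) z := fun K z hKz =>
    mellinConvergent_of_isBigO_rpow_exp hδ (hhloc K) (hh_top K) (hh_bot K) hKz
  have hMθ : ∀ z : ℂ, -α 0 < z.re → MellinConvergent θ z := by
    intro z hz0
    refine mellinConvergent_of_isBigO_rpow_exp hδ hθloc hdecay ?_ hz0
    have := hexp 0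
    simpa only [Finset.range_zero, Finset.sum_empty, sub_zero, neg_neg] using this
  -- step lemma
  have hstep : ∀ K (z : ℂ), -α K < z.re →
      mellin (h K) z = mellin (h (K + 1)) z + c K * (z + (α K : ℂ))⁻¹ := by
    intro K z hKz
    have hmp : HasMellin ((Set.Ioc (0:ℝ) 1).indicator (fun t => (t : ℂ) ^ (α K : ℂ))) z
        (1 / (z + (α K : ℂ))) :=
      hasMellin_cpow_Ioc ((α K : ℝ) : ℂ) (by rw [Complex.ofReal_re]; linarith)
    have hfun : h K = fun t => h (K + 1) t +
        c K • ((Set.Ioc (0:ℝ) 1).indicator (fun t => (t : ℂ) ^ (α K : ℂ)) t) := by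
      funext t
      simp only [hh_def, hg_def]
      by_cases ht : t ∈ Set.Ioc (0 : ℝ) 1
      · rw [Set.indicator_of_mem ht, Set.indicator_of_mem ht, Set.indicator_of_mem ht,
          Finset.sum_range_succ, ← Complex.ofReal_cpow (Set.mem_Ioc.mp ht).1.le, smul_eq_mul]
        ring
      · rw [Set.indicator_of_notMem ht, Set.indicator_of_notMem ht,
          Set.indicator_of_notMem ht]
        simp
    have conv1 : MellinConvergent (h (K + 1)) z :=
      hMh (K + 1) z (by have := hα (Nat.lt_succ_self K); linarith)
    have conv2 : MellinConvergent
        (fun t => c K • ((Set.Ioc (0:ℝ) 1).indicator (fun t => (t : ℂ) ^ (α K : ℂ)) t)) z :=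
      hmp.1.const_smul (c K)
    have hadd := hasMellin_add conv1 conv2
    have h2 := hadd.2
    rw [mellin_const_smul, hmp.2, smul_eq_mul, one_div] at h2
    rw [hfun]
    exact h2
  -- definition of Φ and its coherence
  set Φ : ℕ → ℂ → ℂ := fun K z =>
    mellin θt z + mellin (h K) z + ∑ k ∈ Finset.range K, c k * (z + (α k : ℂ))⁻¹ with hΦ_def
  have hΦmono : ∀ K K' (z : ℂ), K ≤ K' → -α K < z.re → Φ K z = Φ K' z := by
    intro K K' z hKK' hKz
    induction K', hKK' using Nat.le_induction with
    | base => rfl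
    | succ n hn ih =>
        rw [ih]
        have hn' : -α n < z.re := by
          have := hα.monotone hn; linarith
        simp only [hΦ_def, Finset.sum_range_succ, hstep n z hn']
        ring
  set F : ℂ → ℂ := fun z => Φ (Nat.find (hz z)) z with hF_def
  have hF : ∀ (z : ℂ) (K : ℕ), -α K < z.re → F z = Φ K z := fun z K hK =>
    hΦmono _ K z (Nat.find_min' (hz z) hK) (Nat.find_spec (hz z))
  -- differentiability of Φ K
  have hΦdiff : ∀ K (z : ℂ), -α K < z.re → (∀ j, j < K → z ≠ ((-α j : ℝ) : ℂ)) →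
      DifferentiableAt ℂ (Φ K) z := by
    intro K z h1 h2
    simp only [hΦ_def]
    refine DifferentiableAt.add (DifferentiableAt.add ?_ ?_) ?_
    · exact mellin_differentiableAt_of_isBigO_rpow_exp hδ hθtloc hθt_top
        (hθt_bot (z.re - 1)) (sub_one_lt _)
    · exact mellin_differentiableAt_of_isBigO_rpow_exp hδ (hhloc K) (hh_top K) (hh_bot K) h1
    · refine DifferentiableAt.fun_sum fun j hj => ?_
      have hne : z + (α j : ℂ) ≠ 0 := by
        intro h0
        exact h2 j (Finset.mem_range.mp hj)
          (by rw [Complex.ofReal_neg]; exact eq_neg_of_add_eq_zero_left h0)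
      exact (differentiableAt_const _).mul ((differentiableAt_id.add_const _).inv hne)
  constructor
  · -- integrability
    intro z hz0
    exact hMθ z hz0
  refine ⟨F, ?_, ?_, ?_⟩
  · -- differentiability of F
    intro z₀ hz₀
    obtain ⟨K, hK⟩ := hz z₀
    have hopen : IsOpen {z : ℂ | -α K < z.re} := isOpen_lt continuous_const Complex.continuous_re
    have heq : F =ᶠ[nhds z₀] Φ K := by
      filter_upwards [hopen.mem_nhds hK] with z hzz using hF z K hzz
    exact ((hΦdiff K z₀ hK fun j _ => hz₀ j).congr_of_eventuallyEq heq).differentiableWithinAt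
  · -- value on half-plane
    intro z hz0
    rw [hF z 0 hz0]
    simp only [hΦ_def, Finset.range_zero, Finset.sum_empty, add_zero]
    have hint1 : MeasureTheory.IntegrableOn
        (fun t : ℝ => (t : ℂ) ^ (z - 1) • θt t) (Set.Ioi 0) := hMθt z
    have hint2 : MeasureTheory.IntegrableOn
        (fun t : ℝ => (t : ℂ) ^ (z - 1) • h 0 t) (Set.Ioi 0) := hMh 0 z hz0
    have key : ∫ t in Set.Ioi (0:ℝ), (t : ℂ) ^ (z - 1) * θ t =
        (∫ t in Set.Ioi (0:ℝ), (t : ℂ) ^ (z - 1) • θt t) +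
        ∫ t in Set.Ioi (0:ℝ), (t : ℂ) ^ (z - 1) • h 0 t := by
      rw [← MeasureTheory.integral_add hint1 hint2]
      refine setIntegral_congr_fun measurableSet_Ioi fun t ht => ?_
      have hsum : θ t = θt t + h 0 t := by
        have ht0 : (0 : ℝ) < t := Set.mem_Ioi.mp ht
        simp only [hθt_def, hh_def, hg_def]
        by_cases ht1 : t ≤ 1
        · rw [Set.indicator_of_notMem (by simp only [Set.mem_Ioi, not_lt]; exact ht1),
            Set.indicator_of_mem (Set.mem_Ioc.mpr ⟨ht0, ht1⟩)]
          simp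
        · rw [Set.indicator_of_mem (Set.mem_Ioi.mpr (lt_of_not_ge ht1)),
            Set.indicator_of_notMem
              (by simp only [Set.mem_Ioc, not_and, not_le]; exact fun _ => lt_of_not_ge ht1)]
          simp
      rw [hsum, smul_eq_mul, smul_eq_mul, mul_add]
    rw [key]; rfl
  · -- residues
    intro k
    have hwk : ((-α k : ℝ) : ℂ) = -((α k : ℝ) : ℂ) := by push_cast; ring
    refine ⟨{z : ℂ | -α (k + 1) < z.re} ∩ ⋂ j ∈ Finset.range k, {((-α j : ℝ) : ℂ)}ᶜ,
      ?_, fun z => (z + (α k : ℂ)) * (mellin θt z + mellin (h (k + 1)) z +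
        ∑ j ∈ Finset.range k, c j * (z + (α j : ℂ))⁻¹) + c k, ?_, ?_, ?_⟩
    · refine IsOpen.mem_nhds
        ((isOpen_lt continuous_const Complex.continuous_re).inter
          (isOpen_biInter_finset fun j _ => isOpen_compl_singleton)) ⟨?_, ?_⟩
      · show -α (k + 1) < (((-α k : ℝ) : ℂ)).re
        rw [Complex.ofReal_re]
        have := hα (Nat.lt_succ_self k); linarith
      · simp only [Set.mem_iInter, Set.mem_compl_iff, Set.mem_singleton_iff]
        intro j hj
        have : α j < α k := hα (Finset.mem_range.mp hj)
        intro hcontra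
        have := Complex.ofReal_injective hcontra
        linarith
    · -- differentiability of G
      intro z hzU
      obtain ⟨hz1, hz2⟩ := hzU
      simp only [Set.mem_iInter, Set.mem_compl_iff, Set.mem_singleton_iff] at hz2
      have hz1' : -α (k + 1) < z.re := hz1
      refine DifferentiableAt.differentiableWithinAt (DifferentiableAt.add_const _ ?_)
      refine (differentiableAt_id.add_const _).mul
        (DifferentiableAt.add (DifferentiableAt.add ?_ ?_) ?_)
      · exact mellin_differentiableAt_of_isBigO_rpow_exp hδ hθtloc hθt_top
          (hθt_bot (z.re - 1)) (sub_one_lt _)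
      · exact mellin_differentiableAt_of_isBigO_rpow_exp hδ (hhloc (k + 1)) (hh_top (k + 1))
          (hh_bot (k + 1)) hz1'
      · refine DifferentiableAt.fun_sum fun j hj => ?_
        have hne : z + (α j : ℂ) ≠ 0 := by
          intro h0
          exact hz2 j hj (by rw [Complex.ofReal_neg]; exact eq_neg_of_add_eq_zero_left h0)
        exact (differentiableAt_const _).mul ((differentiableAt_id.add_const _).inv hne)
    · -- G z = (z + α k) F z
      intro z hzU hzne
      obtain ⟨hz1, _⟩ := hzU
      have hz1' : -α (k + 1) < z.re := hz1
      rw [hF z (k + 1) hz1']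
      have hne : z + (α k : ℂ) ≠ 0 := by
        intro h0
        exact hzne (by rw [Complex.ofReal_neg]; exact eq_neg_of_add_eq_zero_left h0)
      simp only [hΦ_def, Finset.sum_range_succ]
      field_simp
      ring
    · -- value at the pole
      have h0 : ((-α k : ℝ) : ℂ) + (α k : ℂ) = 0 := by rw [hwk]; ring
      simp only [h0, zero_mul, zero_add]
end

section
/- Let V be a finite-dimensional complex vector space and V = U ⊕ W a direct sum decomposition. Let T : V → V be a linear endomorphism with T(U) ⊆ U and T(W) ⊆ W such that every eigenvalue of the restriction T|U has absolute value strictly greater than the absolute value of every eigenvalue of the restriction T|W. Let g : V → V be an invertible linear map and set T' = g ∘ T ∘ g⁻¹. Assume that also T'(U) ⊆ U and T'(W) ⊆ W and that every eigenvalue of T'|U has absolute value strictly greater than that of every eigenvalue of T'|W. Then g(U) = U. -/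
open Module Module.End Submodule

namespace Stmt2Aux

variable {V : Type*} [AddCommGroup V] [Module ℂ V] [FiniteDimensional ℂ V]

lemma pow_sub_smul_mem (S : Module.End ℂ V) {U : Submodule ℂ V}
    (hSU : ∀ x ∈ U, S x ∈ U) (μ : ℂ) (k : ℕ) {x : V} (hx : x ∈ U) :
    ((S - μ • 1) ^ k) x ∈ U := by
  induction k generalizing x with
  | zero => simpa using hx
  | succ n ih =>
    rw [pow_succ', Module.End.mul_apply]
    have h := ih hx
    simpa using U.sub_mem (hSU _ h) (U.smul_mem μ h)

lemma split {U W : Submodule ℂ V} (hcompl : IsCompl U W)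
    (S : Module.End ℂ V) (hSU : ∀ x ∈ U, S x ∈ U) (hSW : ∀ x ∈ W, S x ∈ W)
    (μ : ℂ) {x : V} (hx : x ∈ S.maxGenEigenspace μ) :
    ∃ u ∈ U ⊓ S.maxGenEigenspace μ, ∃ w ∈ W ⊓ S.maxGenEigenspace μ, x = u + w := by
  obtain ⟨k, hk⟩ := (S.mem_maxGenEigenspace μ x).mp hx
  obtain ⟨u, w, hu, hw, hx'⟩ := Submodule.codisjoint_iff_exists_add_eq.mp hcompl.codisjoint x
  have hpu : ((S - μ • 1) ^ k) u ∈ U := pow_sub_smul_mem S hSU μ k hu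
  have hpw : ((S - μ • 1) ^ k) w ∈ W := pow_sub_smul_mem S hSW μ k hw
  have hsum : ((S - μ • 1) ^ k) u + ((S - μ • 1) ^ k) w = 0 := by
    rw [← map_add, hx', hk]
  have hu0 : ((S - μ • 1) ^ k) u = 0 := by
    have : ((S - μ • 1) ^ k) u ∈ U ⊓ W := by
      refine ⟨hpu, ?_⟩
      have : ((S - μ • 1) ^ k) u = -((S - μ • 1) ^ k) w := eq_neg_of_add_eq_zero_left hsum
      rw [this]; exact W.neg_mem hpw
    rwa [hcompl.inf_eq_bot, Submodule.mem_bot] at this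
  have hw0 : ((S - μ • 1) ^ k) w = 0 := by rwa [hu0, zero_add] at hsum
  exact ⟨u, ⟨hu, (S.mem_maxGenEigenspace μ u).mpr ⟨k, hu0⟩⟩,
    w, ⟨hw, (S.mem_maxGenEigenspace μ w).mpr ⟨k, hw0⟩⟩, hx'.symm⟩

lemma hasEigenvalue_restrict_of_mem {U : Submodule ℂ V} (S : Module.End ℂ V)
    (hSU : ∀ x ∈ U, S x ∈ U) (μ : ℂ) {u : V}
    (hu : u ∈ U ⊓ S.maxGenEigenspace μ) (hu0 : u ≠ 0) :
    HasEigenvalue (S.restrict hSU) μ := by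
  rw [Submodule.inf_genEigenspace S U hSU] at hu
  obtain ⟨u', hu', rfl⟩ := hu
  have hne : u' ≠ 0 := by rintro rfl; simp at hu0
  have h : Module.End.HasUnifEigenvalue (S.restrict hSU) μ ⊤ :=
    (Submodule.ne_bot_iff _).mpr ⟨u', hu', hne⟩
  exact h.lt zero_lt_one

lemma maxGen_ne_bot_of_restrict {U : Submodule ℂ V} (S : Module.End ℂ V)
    (hSU : ∀ x ∈ U, S x ∈ U) {μ : ℂ} (h : HasEigenvalue (S.restrict hSU) μ) :
    S.maxGenEigenspace μ ≠ ⊥ := by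
  have h' : Module.End.HasUnifEigenvalue (S.restrict hSU) μ ⊤ := h.le le_top
  obtain ⟨u', hu', hne⟩ := (Submodule.ne_bot_iff _).mp h'
  refine (Submodule.ne_bot_iff _).mpr ⟨(u' : V), ?_, by simpa using hne⟩
  have : (u' : V) ∈ U ⊓ S.maxGenEigenspace μ := by
    rw [Submodule.inf_genEigenspace S U hSU]
    exact ⟨u', hu', rfl⟩
  exact this.2

lemma eq_iSup {U W : Submodule ℂ V} (hcompl : IsCompl U W)
    (S : Module.End ℂ V) (hSU : ∀ x ∈ U, S x ∈ U) (hSW : ∀ x ∈ W, S x ∈ W)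
    (hd : ∀ μ : ℂ, HasEigenvalue (S.restrict hSU) μ → ¬ HasEigenvalue (S.restrict hSW) μ) :
    U = ⨆ μ ∈ {μ : ℂ | HasEigenvalue (S.restrict hSU) μ}, S.maxGenEigenspace μ := by
  apply le_antisymm
  · have htop : U = ⨆ μ : ℂ, Submodule.map U.subtype (Module.End.maxGenEigenspace (S.restrict hSU) μ) := by
      rw [← Submodule.map_iSup, iSup_maxGenEigenspace_eq_top, Submodule.map_top,
        Submodule.range_subtype]
    refine htop.le.trans (iSup_le fun μ => ?_)
    by_cases h : HasEigenvalue (S.restrict hSU) μ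
    · have hle : Submodule.map U.subtype (Module.End.maxGenEigenspace (S.restrict hSU) μ)
          ≤ S.maxGenEigenspace μ := by
        rw [← Submodule.inf_genEigenspace S U hSU]
        exact inf_le_right
      exact hle.trans (le_iSup₂ (f := fun μ _ => S.maxGenEigenspace μ) μ h)
    · have hb : Module.End.maxGenEigenspace (S.restrict hSU) μ = ⊥ := by
        by_contra hb
        have h2 : Module.End.HasUnifEigenvalue (S.restrict hSU) μ ⊤ := hb
        exact h (h2.lt zero_lt_one)
      rw [hb, Submodule.map_bot]
      exact bot_le
  · refine iSup₂_le fun μ hμ x hx => ?_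
    obtain ⟨u, hu, w, hw, rfl⟩ := split hcompl S hSU hSW μ hx
    have hw0 : w = 0 := by
      by_contra hw0
      exact hd μ hμ (hasEigenvalue_restrict_of_mem S hSW μ hw hw0)
    rw [hw0, add_zero]
    exact hu.1

lemma map_maxGenEigenspace (g : V ≃ₗ[ℂ] V) (T T' : Module.End ℂ V)
    (hT' : T' = g.toLinearMap ∘ₗ T ∘ₗ g.symm.toLinearMap) (μ : ℂ) :
    Submodule.map g.toLinearMap (T.maxGenEigenspace μ) = T'.maxGenEigenspace μ := by
  have key : ∀ (k : ℕ) (x : V), ((T' - μ • 1) ^ k) (g x) = g (((T - μ • 1) ^ k) x) := by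
    intro k
    induction k with
    | zero => intro x; simp
    | succ n ih =>
      intro x
      have h1 : (T' - μ • 1) (g x) = g ((T - μ • 1) x) := by
        subst hT'; simp
      rw [pow_succ, Module.End.mul_apply, h1, ih, ← Module.End.mul_apply, ← pow_succ]
  ext x
  simp only [Submodule.mem_map, mem_maxGenEigenspace, LinearEquiv.coe_coe]
  constructor
  · rintro ⟨y, ⟨k, hk⟩, rfl⟩
    exact ⟨k, by rw [key, hk, map_zero]⟩
  · rintro ⟨k, hk⟩
    refine ⟨g.symm x, ⟨k, ?_⟩, by simp⟩
    apply g.injective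
    rw [← key, g.apply_symm_apply, hk, map_zero]

lemma hasEigenvalue_restrict_or {U W : Submodule ℂ V} (hcompl : IsCompl U W)
    (S : Module.End ℂ V) (hSU : ∀ x ∈ U, S x ∈ U) (hSW : ∀ x ∈ W, S x ∈ W)
    (μ : ℂ) (hμ : S.maxGenEigenspace μ ≠ ⊥) :
    HasEigenvalue (S.restrict hSU) μ ∨ HasEigenvalue (S.restrict hSW) μ := by
  obtain ⟨x, hx, hx0⟩ := (Submodule.ne_bot_iff _).mp hμ
  obtain ⟨u, hu, w, hw, rfl⟩ := split hcompl S hSU hSW μ hx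
  by_cases hu0 : u = 0
  · right
    refine hasEigenvalue_restrict_of_mem S hSW μ hw ?_
    rintro rfl; exact hx0 (by rw [hu0, add_zero])
  · exact Or.inl (hasEigenvalue_restrict_of_mem S hSU μ hu hu0)

end Stmt2Aux

open Stmt2Aux



/-- If `T` preserves a direct sum decomposition `V = U ⊕ W` with all eigenvalues of
`T|U` strictly larger in absolute value than all eigenvalues of `T|W`, and the
conjugate `T' = g T g⁻¹` also preserves the decomposition with the same eigenvalue
separation, then `g(U) = U`. -/
theorem stmt_2 {V : Type*} [AddCommGroup V] [Module ℂ V] [FiniteDimensional ℂ V]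
    (U W : Submodule ℂ V) (hcompl : IsCompl U W)
    (T : Module.End ℂ V) (hTU : ∀ x ∈ U, T x ∈ U) (hTW : ∀ x ∈ W, T x ∈ W)
    (hsep : ∀ a b : ℂ, Module.End.HasEigenvalue (T.restrict hTU) a →
      Module.End.HasEigenvalue (T.restrict hTW) b → ‖b‖ < ‖a‖)
    (g : V ≃ₗ[ℂ] V) (T' : Module.End ℂ V)
    (hT' : T' = g.toLinearMap ∘ₗ T ∘ₗ g.symm.toLinearMap)
    (hT'U : ∀ x ∈ U, T' x ∈ U) (hT'W : ∀ x ∈ W, T' x ∈ W)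
    (hsep' : ∀ a b : ℂ, Module.End.HasEigenvalue (T'.restrict hT'U) a →
      Module.End.HasEigenvalue (T'.restrict hT'W) b → ‖b‖ < ‖a‖) :
    Submodule.map g.toLinearMap U = U := by

  classical
  have hdT : ∀ μ, Module.End.HasEigenvalue (T.restrict hTU) μ →
      ¬ Module.End.HasEigenvalue (T.restrict hTW) μ :=
    fun μ h1 h2 => lt_irrefl _ (hsep μ μ h1 h2)
  have hdT' : ∀ μ, Module.End.HasEigenvalue (T'.restrict hT'U) μ →
      ¬ Module.End.HasEigenvalue (T'.restrict hT'W) μ :=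
    fun μ h1 h2 => lt_irrefl _ (hsep' μ μ h1 h2)
  have hU : U = ⨆ μ ∈ {μ : ℂ | Module.End.HasEigenvalue (T.restrict hTU) μ},
      T.maxGenEigenspace μ := eq_iSup hcompl T hTU hTW hdT
  have hU' : U = ⨆ μ ∈ {μ : ℂ | Module.End.HasEigenvalue (T'.restrict hT'U) μ},
      T'.maxGenEigenspace μ := eq_iSup hcompl T' hT'U hT'W hdT'
  have hmapμ : ∀ μ : ℂ, Submodule.map g.toLinearMap (T.maxGenEigenspace μ)
      = T'.maxGenEigenspace μ := map_maxGenEigenspace g T T' hT'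
  have hmap : Submodule.map g.toLinearMap U
      = ⨆ μ ∈ {μ : ℂ | Module.End.HasEigenvalue (T.restrict hTU) μ},
        T'.maxGenEigenspace μ := by
    conv_lhs => rw [hU]
    simp_rw [Submodule.map_iSup, hmapμ]
  have hfr : Module.finrank ℂ (Submodule.map g.toLinearMap U) = Module.finrank ℂ U :=
    LinearEquiv.finrank_map_eq g U
  by_cases hEE' : {μ : ℂ | Module.End.HasEigenvalue (T.restrict hTU) μ}
      ⊆ {μ : ℂ | Module.End.HasEigenvalue (T'.restrict hT'U) μ}
  · have hle : Submodule.map g.toLinearMap U ≤ U := by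
      rw [hmap]
      conv_rhs => rw [hU']
      exact biSup_mono hEE'
    exact Submodule.eq_of_le_of_finrank_le hle (by rw [hfr])
  · by_cases hE'E : {μ : ℂ | Module.End.HasEigenvalue (T'.restrict hT'U) μ}
        ⊆ {μ : ℂ | Module.End.HasEigenvalue (T.restrict hTU) μ}
    · have hle : U ≤ Submodule.map g.toLinearMap U := by
        conv_lhs => rw [hU']
        rw [hmap]
        exact biSup_mono hE'E
      exact (Submodule.eq_of_le_of_finrank_le hle (by rw [hfr])).symm
    · exfalso
      obtain ⟨ν, hνE, hνE'⟩ := Set.not_subset.mp hEE'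
      obtain ⟨μ, hμE', hμE⟩ := Set.not_subset.mp hE'E
      have h2 : T'.maxGenEigenspace ν ≠ ⊥ := by
        rw [← hmapμ ν]
        obtain ⟨x, hx, hx0⟩ := (Submodule.ne_bot_iff _).mp (maxGen_ne_bot_of_restrict T hTU hνE)
        exact (Submodule.ne_bot_iff _).mpr ⟨g x, ⟨x, hx, rfl⟩, by simpa using hx0⟩
      have hνW' : Module.End.HasEigenvalue (T'.restrict hT'W) ν :=
        (hasEigenvalue_restrict_or hcompl T' hT'U hT'W ν h2).resolve_left hνE'
      have h3 : T.maxGenEigenspace μ ≠ ⊥ := by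
        obtain ⟨x, hx, hx0⟩ :=
          (Submodule.ne_bot_iff _).mp (maxGen_ne_bot_of_restrict T' hT'U hμE')
        have : g.symm x ∈ T.maxGenEigenspace μ := by
          have := hmapμ μ
          rw [← this] at hx
          obtain ⟨y, hy, rfl⟩ := hx
          simpa using hy
        exact (Submodule.ne_bot_iff _).mpr ⟨g.symm x, this, by simpa using hx0⟩
      have hμW : Module.End.HasEigenvalue (T.restrict hTW) μ :=
        (hasEigenvalue_restrict_or hcompl T hTU hTW μ h3).resolve_left hμE
      exact absurd (hsep ν μ hνE hμW) (not_lt.mpr (hsep' μ ν hμE' hνW').le)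
end

section
/- Let G be a locally compact Hausdorff topological group with left Haar measure μ, let U be a compact open subgroup of G, and let Γ be a discrete subgroup of G (discrete in the subspace topology). Let f : G → ℂ be integrable with respect to μ and right U-invariant, i.e. f(gu) = f(g) for all g ∈ G and u ∈ U. Then for all x, y ∈ G the set Γ ∩ yUy⁻¹ is finite and ∑_{γ∈Γ} |f(x⁻¹ γ y)| ≤ (#(Γ ∩ yUy⁻¹) / μ(U)) · ∫_G |f| dμ. In particular the sum ∑_{γ∈Γ} f(x⁻¹ γ y) converges absolutely. -/
/-- Kernel-convergence estimate: for a left Haar measure `μ` on a locally compact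
group `G`, a compact open subgroup `U`, a discrete subgroup `Γ`, and an integrable
right-`U`-invariant function `f`, the set `Γ ∩ yUy⁻¹` is finite and
`∑_{γ∈Γ} ‖f(x⁻¹γy)‖ ≤ #(Γ ∩ yUy⁻¹)/μ(U) · ‖f‖₁`; in particular the series
converges absolutely. -/
theorem stmt_6 {G : Type*} [Group G] [TopologicalSpace G] [IsTopologicalGroup G]
    [LocallyCompactSpace G] [T2Space G] [MeasurableSpace G] [BorelSpace G]
    (μ : MeasureTheory.Measure G) [μ.IsHaarMeasure]
    (U : Subgroup G) (hUopen : IsOpen (U : Set G)) (hUcpt : IsCompact (U : Set G))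
    (Γ : Subgroup G) (hΓdisc : DiscreteTopology Γ)
    (f : G → ℂ) (hf : MeasureTheory.Integrable f μ)
    (hinv : ∀ g : G, ∀ u ∈ U, f (g * u) = f g)
    (x y : G) :
    ({γ : G | γ ∈ Γ ∧ y⁻¹ * γ * y ∈ U}).Finite ∧
    Summable (fun γ : Γ => ‖f (x⁻¹ * (γ : G) * y)‖) ∧
    ∑' γ : Γ, ‖f (x⁻¹ * (γ : G) * y)‖ ≤
      (({γ : G | γ ∈ Γ ∧ y⁻¹ * γ * y ∈ U}).ncard : ℝ) / (μ (U : Set G)).toReal *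
        ∫ g, ‖f g‖ ∂μ := by
  classical
  set S : Set G := {γ : G | γ ∈ Γ ∧ y⁻¹ * γ * y ∈ U} with hS
  -- `S` is finite: it is a discrete subset of a compact set.
  have hScpt : IsCompact S := by
    have hK : IsCompact ((fun u => y * u * y⁻¹) '' (U : Set G)) :=
      hUcpt.image (by continuity)
    have hSsub : S = (Γ : Set G) ∩ ((fun u => y * u * y⁻¹) '' (U : Set G)) := by
      ext γ
      constructor
      · rintro ⟨h1, h2⟩
        exact ⟨h1, ⟨y⁻¹ * γ * y, h2, by group⟩⟩
      · rintro ⟨h1, u, hu, h2⟩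
        refine ⟨h1, ?_⟩
        have : y⁻¹ * γ * y = u := by rw [← h2]; group
        rw [this]; exact hu
    rw [hSsub]
    exact hK.inter_left (Subgroup.isClosed_of_discrete)
  have hSdisc : DiscreteTopology S := by
    have : DiscreteTopology ((Γ : Set G) : Type _) := hΓdisc
    exact DiscreteTopology.of_subset this (fun γ hγ => hγ.1)
  have hSfin : S.Finite := hScpt.finite (isDiscrete_iff_discreteTopology.mpr hSdisc)
  refine ⟨hSfin, ?_⟩
  -- Measure of `U` is positive and finite.
  have hU0 : 0 < (μ (U : Set G)).toReal := by
    refine ENNReal.toReal_pos ?_ hUcpt.measure_lt_top.ne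
    exact (hUopen.measure_pos μ ⟨1, U.one_mem⟩).ne'
  -- `f` descends (in norm) to the coset space `G ⧸ U`.
  have hcoset : ∀ g₁ g₂ : G, (QuotientGroup.mk g₁ : G ⧸ U) = QuotientGroup.mk g₂ →
      ‖f g₁‖ = ‖f g₂‖ := by
    intro g₁ g₂ h
    have hu : g₁⁻¹ * g₂ ∈ U := QuotientGroup.eq.mp h
    have := hinv g₁ _ hu
    rw [show g₁ * (g₁⁻¹ * g₂) = g₂ by group] at this
    rw [this]
  set Fbar : G ⧸ U → ℝ := fun c => ‖f c.out‖ with hFbar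
  have hFbar_eq : ∀ g : G, ‖f g‖ = Fbar (QuotientGroup.mk g) := by
    intro g
    exact hcoset g (QuotientGroup.mk g : G ⧸ U).out (Quotient.out_eq _).symm
  have hFbar_nonneg : ∀ c, 0 ≤ Fbar c := fun c => norm_nonneg _
  -- The fibers of `QuotientGroup.mk : G → G ⧸ U`.
  set A : G ⧸ U → Set G := fun c => (QuotientGroup.mk : G → G ⧸ U) ⁻¹' {c} with hA
  have hAeq : ∀ c : G ⧸ U, A c = (fun g => c.out⁻¹ * g) ⁻¹' (U : Set G) := by
    intro c
    ext g
    simp only [hA, Set.mem_preimage, Set.mem_singleton_iff, SetLike.mem_coe]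
    have hout : (QuotientGroup.mk c.out : G ⧸ U) = c := Quotient.out_eq c
    constructor
    · intro h
      exact QuotientGroup.eq.mp (hout.trans h.symm)
    · intro h
      exact (QuotientGroup.eq.mpr h).symm.trans hout
  have hAmeas : ∀ c : G ⧸ U, MeasurableSet (A c) := by
    intro c
    rw [hAeq]
    exact (hUopen.measurableSet).preimage (measurable_const_mul _)
  have hAμ : ∀ c : G ⧸ U, μ (A c) = μ (U : Set G) := by
    intro c
    rw [hAeq]
    exact MeasureTheory.measure_preimage_mul μ c.out⁻¹ _
  -- Integral over each coset.
  have hAint : ∀ c : G ⧸ U, ∫ g in A c, ‖f g‖ ∂μ = Fbar c * (μ (U : Set G)).toReal := by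
    intro c
    have h1 : ∫ g in A c, ‖f g‖ ∂μ = ∫ _ in A c, Fbar c ∂μ := by
      refine MeasureTheory.setIntegral_congr_fun (hAmeas c) ?_
      intro g hg
      have hgc : (QuotientGroup.mk g : G ⧸ U) = c := hg
      show ‖f g‖ = Fbar c
      rw [hFbar_eq g, hgc]
    rw [h1, MeasureTheory.setIntegral_const, MeasureTheory.measureReal_def, hAμ, smul_eq_mul, mul_comm]
  -- Summing `Fbar` over finitely many distinct cosets.
  have hcosetsum : ∀ T : Finset (G ⧸ U),
      (∑ c ∈ T, Fbar c) * (μ (U : Set G)).toReal ≤ ∫ g, ‖f g‖ ∂μ := by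
    intro T
    have hInt : MeasureTheory.Integrable (fun g => ‖f g‖) μ := hf.norm
    calc (∑ c ∈ T, Fbar c) * (μ (U : Set G)).toReal
        = ∑ c ∈ T, ∫ g in A c, ‖f g‖ ∂μ := by
          rw [Finset.sum_mul]
          exact Finset.sum_congr rfl fun c _ => (hAint c).symm
      _ = ∫ g in ⋃ c ∈ T, A c, ‖f g‖ ∂μ := by
          refine (MeasureTheory.integral_biUnion_finset T (fun c _ => hAmeas c) ?_
            (fun c _ => hInt.integrableOn)).symm
          intro c _ d _ hcd
          exact Set.disjoint_left.mpr fun g hgc hgd => hcd (hgc.symm.trans hgd)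
      _ ≤ ∫ g, ‖f g‖ ∂μ :=
          MeasureTheory.setIntegral_le_integral hInt
            (MeasureTheory.ae_of_all μ fun g => norm_nonneg _)
  -- The key bound on partial sums.
  have hkey : ∀ F : Finset Γ, ∑ γ ∈ F, ‖f (x⁻¹ * (γ : G) * y)‖ ≤
      (S.ncard : ℝ) / (μ (U : Set G)).toReal * ∫ g, ‖f g‖ ∂μ := by
    intro F
    set q : Γ → G ⧸ U := fun γ => QuotientGroup.mk (x⁻¹ * (γ : G) * y) with hq
    set T : Finset (G ⧸ U) := F.image q with hT
    have hmap : ∀ γ ∈ F, q γ ∈ T := fun γ hγ => Finset.mem_image_of_mem q hγ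
    have hsplit : ∑ γ ∈ F, ‖f (x⁻¹ * (γ : G) * y)‖ =
        ∑ c ∈ T, ∑ γ ∈ F.filter (fun γ => q γ = c), ‖f (x⁻¹ * (γ : G) * y)‖ :=
      (Finset.sum_fiberwise_of_maps_to hmap _).symm
    rw [hsplit]
    -- each fiber has cardinality at most `S.ncard`
    have hfiber : ∀ c ∈ T, ∑ γ ∈ F.filter (fun γ => q γ = c), ‖f (x⁻¹ * (γ : G) * y)‖ ≤
        (S.ncard : ℝ) * Fbar c := by
      intro c hc
      obtain ⟨γ₀, _, hγ₀⟩ := Finset.mem_image.mp hc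
      have hconst : ∑ γ ∈ F.filter (fun γ => q γ = c), ‖f (x⁻¹ * (γ : G) * y)‖ =
          ((F.filter (fun γ => q γ = c)).card : ℝ) * Fbar c := by
        rw [Finset.sum_congr rfl (fun γ hγ => ?_), Finset.sum_const, nsmul_eq_mul]
        have hγc : q γ = c := (Finset.mem_filter.mp hγ).2
        rw [hFbar_eq (x⁻¹ * (γ : G) * y)]
        exact congrArg Fbar hγc
      rw [hconst]
      refine mul_le_mul_of_nonneg_right ?_ (hFbar_nonneg c)
      rw [Set.ncard_eq_toFinset_card S hSfin]
      refine Nat.cast_le.mpr (Finset.card_le_card_of_injOn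
        (fun γ => (γ₀ : G)⁻¹ * (γ : G)) ?_ ?_)
      · intro γ hγ
        have hγc : q γ = c := (Finset.mem_filter.mp hγ).2
        have : q γ₀ = q γ := by rw [hγ₀, hγc]
        have hu : (x⁻¹ * (γ₀ : G) * y)⁻¹ * (x⁻¹ * (γ : G) * y) ∈ U :=
          QuotientGroup.eq.mp this
        rw [Finset.mem_coe, Set.Finite.mem_toFinset]
        refine ⟨Γ.mul_mem (Γ.inv_mem γ₀.2) γ.2, ?_⟩
        have heq : y⁻¹ * ((γ₀ : G)⁻¹ * (γ : G)) * y =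
            (x⁻¹ * (γ₀ : G) * y)⁻¹ * (x⁻¹ * (γ : G) * y) := by group
        rw [heq]; exact hu
      · intro γ₁ _ γ₂ _ h
        have : (γ₁ : G) = (γ₂ : G) := mul_left_cancel h
        exact Subtype.ext this
    calc ∑ c ∈ T, ∑ γ ∈ F.filter (fun γ => q γ = c), ‖f (x⁻¹ * (γ : G) * y)‖
        ≤ ∑ c ∈ T, (S.ncard : ℝ) * Fbar c := Finset.sum_le_sum hfiber
      _ = (S.ncard : ℝ) * ∑ c ∈ T, Fbar c := by rw [Finset.mul_sum]
      _ ≤ (S.ncard : ℝ) / (μ (U : Set G)).toReal * ∫ g, ‖f g‖ ∂μ := by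
          rw [div_mul_eq_mul_div, mul_div_assoc]
          refine mul_le_mul_of_nonneg_left ?_ (Nat.cast_nonneg _)
          rw [le_div_iff₀ hU0]
          exact hcosetsum T
  have hsummable : Summable (fun γ : Γ => ‖f (x⁻¹ * (γ : G) * y)‖) :=
    summable_of_sum_le (fun γ => norm_nonneg _) hkey
  exact ⟨hsummable, Summable.tsum_le_of_sum_le hsummable hkey⟩
end
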